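/- Let d ≥ 2 and let U be a random vector in ℝ^d with law N(0, (1/d)Id). For 0 < r₋ < r₊ define the radially truncated co-linear coupling V := V(r₋,r₊) by V := U on the event {|U| ∉ [r₋,r₊]}, and V := c(r₋,r₊)·U/|U| on the event {|U| ∈ [r₋,r₊]}, where c(r₋,r₊) := ( 𝔼(|U|²·1_{|U|∈[r₋,r₊]}) / ℙ(|U|∈[r₋,r₊]) )^{1/2} (so that 𝔼V = 0 and 𝔼|V|² = 1). Let (U_*,V_*) be an independent copy of (U,V), set D(r₋,r₊) := 𝔼( |U−U_*||V−V_*| − (U−U_*)·(V−V_*) ) and R(r₋,r₊) := f(𝔼|U−V|²)/D(r₋,r₊), with the convention R(r₋,r₊) = +∞ when D(r₋,r₊) = 0. Then the coupling/coupling-creation ratio blows up in the iterated limit: for every M > 0 there exists r₀ > 0 such that for every r₋ ≥ r₀ one has liminf_{r₊ → r₋⁺} R(r₋,r₊) ≥ M. -/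

import Mathlib

open MeasureTheory ProbabilityTheory Filter
open scoped RealInnerProductSpace
set_option maxHeartbeats 2000000

/-- The centered Gaussian distribution `N(0, (1/d)·Id)` on `ℝ^d`: the product of `d`
one-dimensional centered Gaussians of variance `1/d`, transported to Euclidean space. -/
noncomputable def gaussLaw (d : ℕ) : Measure (EuclideanSpace ℝ (Fin d)) :=
  Measure.map (MeasurableEquiv.toLp 2 (Fin d → ℝ))
    (Measure.pi fun _ : Fin d => gaussianReal 0 ((d : NNReal)⁻¹))

/-- The normalizing constant `c(r₋,r₊) = (𝔼(|U|²·1_{|U|∈[r₋,r₊]}) / ℙ(|U|∈[r₋,r₊]))^{1/2}`. -/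
noncomputable def truncConst {d : ℕ} {Ω : Type*} [MeasurableSpace Ω] (μ : Measure Ω)
    (U : Ω → EuclideanSpace ℝ (Fin d)) (rm rp : ℝ) : ℝ :=
  Real.sqrt ((∫ ω, (if ‖U ω‖ ∈ Set.Icc rm rp then ‖U ω‖ ^ 2 else 0) ∂μ) /
    (μ {ω | ‖U ω‖ ∈ Set.Icc rm rp}).toReal)

/-- The radially truncated co-linear coupling `V(r₋,r₊)` of `U`: `V = U` off the event
`{|U| ∈ [r₋,r₊]}` and `V = c(r₋,r₊)·U/|U|` on it. -/
noncomputable def truncCoupl {d : ℕ} {Ω : Type*} [MeasurableSpace Ω] (μ : Measure Ω)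
    (U : Ω → EuclideanSpace ℝ (Fin d)) (rm rp : ℝ) : Ω → EuclideanSpace ℝ (Fin d) :=
  fun ω => if ‖U ω‖ ∈ Set.Icc rm rp then truncConst μ U rm rp • (‖U ω‖⁻¹ • U ω) else U ω

/-- The coupling creation `D(r₋,r₊) = 𝔼(|U−U_*||V−V_*| − (U−U_*)·(V−V_*))`, where
`V = V(r₋,r₊)` and `(U_*,V_*)` is an independent copy of `(U,V)` (built from `U_*`). -/
noncomputable def couplCreation {d : ℕ} {Ω : Type*} [MeasurableSpace Ω] (μ : Measure Ω)
    (U Us : Ω → EuclideanSpace ℝ (Fin d)) (rm rp : ℝ) : ℝ :=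
  ∫ ω, (‖U ω - Us ω‖ * ‖truncCoupl μ U rm rp ω - truncCoupl μ Us rm rp ω‖
    - ⟪U ω - Us ω, truncCoupl μ U rm rp ω - truncCoupl μ Us rm rp ω⟫) ∂μ

/-- The coupling / coupling-creation ratio `R(r₋,r₊) = f(𝔼|U−V|²)/D(r₋,r₊)`, with the
convention `R = +∞` when `D = 0`; here `f x = x − x²/4`. -/
noncomputable def couplRatio {d : ℕ} {Ω : Type*} [MeasurableSpace Ω] (μ : Measure Ω)
    (U Us : Ω → EuclideanSpace ℝ (Fin d)) (rm rp : ℝ) : EReal :=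
  if couplCreation μ U Us rm rp = 0 then ⊤
  else (((∫ ω, ‖U ω - truncCoupl μ U rm rp ω‖ ^ 2 ∂μ)
    - (∫ ω, ‖U ω - truncCoupl μ U rm rp ω‖ ^ 2 ∂μ) ^ 2 / 4) /
      couplCreation μ U Us rm rp : ℝ)


section Helpers

variable {E : Type*} [NormedAddCommGroup E] [InnerProductSpace ℝ E]

lemma inner_expand (a b : E) : ⟪a, b⟫ = ‖a‖ ^ 2 + ⟪a, b - a⟫ := by
  rw [inner_sub_right, real_inner_self_eq_norm_sq]; ring

lemma near_bound (a b : E) : ‖a‖ * ‖b‖ - ⟪a, b⟫ ≤ 2 * ‖a‖ * ‖b - a‖ := by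
  have h1 := inner_expand a b
  have h2 : ‖b‖ ≤ ‖a‖ + ‖b - a‖ := by
    have hb2 : b = a + (b - a) := by abel
    calc ‖b‖ = ‖a + (b - a)‖ := by rw [← hb2]
    _ ≤ ‖a‖ + ‖b - a‖ := norm_add_le _ _
  have h3 : |⟪a, b - a⟫| ≤ ‖a‖ * ‖b - a‖ := abs_real_inner_le_norm _ _
  have h4 := abs_le.1 h3
  nlinarith [norm_nonneg a, norm_nonneg (b - a)]

lemma proj_sq (a w : E) (ha : a ≠ 0) :
    ‖w - (⟪a, w⟫ / ‖a‖ ^ 2) • a‖ ^ 2 = ‖w‖ ^ 2 - ⟪a, w⟫ ^ 2 / ‖a‖ ^ 2 := by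
  have ha' : ‖a‖ ≠ 0 := norm_ne_zero_iff.2 ha
  rw [norm_sub_sq_real, norm_smul, real_inner_smul_right, real_inner_comm w a]
  rw [mul_pow, Real.norm_eq_abs, sq_abs]
  field_simp
  ring

lemma proj_le (a w : E) (ha : a ≠ 0) (s : ℝ) :
    ‖w - (⟪a, w⟫ / ‖a‖ ^ 2) • a‖ ≤ ‖w - s • a‖ := by
  have ha' : ‖a‖ ≠ 0 := norm_ne_zero_iff.2 ha
  have key : ‖w - s • a‖ ^ 2 = ‖w - (⟪a, w⟫ / ‖a‖ ^ 2) • a‖ ^ 2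
      + (⟪a, w⟫ / ‖a‖ ^ 2 - s) ^ 2 * ‖a‖ ^ 2 := by
    rw [proj_sq a w ha, norm_sub_sq_real, norm_smul, real_inner_smul_right,
      real_inner_comm w a, mul_pow, Real.norm_eq_abs, sq_abs]
    field_simp
    ring
  refine le_of_pow_le_pow_left₀ two_ne_zero (norm_nonneg _) ?_
  nlinarith [sq_nonneg (⟪a, w⟫ / ‖a‖ ^ 2 - s), sq_nonneg ‖a‖]

lemma proj_smul (a w : E) (t : ℝ) :
    (t • w) - (⟪a, t • w⟫ / ‖a‖ ^ 2) • a = t • (w - (⟪a, w⟫ / ‖a‖ ^ 2) • a) := by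
  rw [real_inner_smul_right, smul_sub, smul_smul, mul_div_assoc]

lemma proj_sub (a w w' : E) :
    (w - w') - (⟪a, w - w'⟫ / ‖a‖ ^ 2) • a
      = (w - (⟪a, w⟫ / ‖a‖ ^ 2) • a) - (w' - (⟪a, w'⟫ / ‖a‖ ^ 2) • a) := by
  rw [inner_sub_right, sub_div, sub_smul]
  abel

lemma far_bound (a b : E) (ha : a ≠ 0) (hd : ‖b - a‖ ≤ ‖a‖ / 2) :
    ‖a‖ * ‖b‖ - ⟪a, b⟫ ≤ 2 * ‖(b - a) - (⟪a, b - a⟫ / ‖a‖ ^ 2) • a‖ ^ 2 := by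
  have ha' : (0:ℝ) < ‖a‖ := norm_pos_iff.2 ha
  have hip : ‖a‖ ^ 2 / 2 ≤ ⟪a, b⟫ := by
    have h1 := inner_expand a b
    have h3 := abs_le.1 (abs_real_inner_le_norm a (b - a))
    nlinarith
  have hb : ‖a‖ / 2 ≤ ‖b‖ := by
    have : ‖a‖ ≤ ‖b‖ + ‖b - a‖ := by
      have ha2 : a = b - (b - a) := by abel
      calc ‖a‖ = ‖b - (b - a)‖ := by rw [← ha2]
      _ ≤ ‖b‖ + ‖b - a‖ := norm_sub_le _ _
    linarith
  have hPb : (b - (⟪a, b⟫ / ‖a‖ ^ 2) • a) = (b - a) - (⟪a, b - a⟫ / ‖a‖ ^ 2) • a := by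
    have h := proj_sub a b a
    have : (a - (⟪a, a⟫ / ‖a‖ ^ 2) • a) = 0 := by
      rw [real_inner_self_eq_norm_sq, div_self (by positivity), one_smul, sub_self]
    rw [h, this, sub_zero]
  have hkey : (‖a‖ * ‖b‖ - ⟪a, b⟫) * (‖a‖ * ‖b‖ + ⟪a, b⟫)
      = ‖a‖ ^ 2 * ‖(b - a) - (⟪a, b - a⟫ / ‖a‖ ^ 2) • a‖ ^ 2 := by
    rw [← hPb, proj_sq a b ha]
    field_simp
    ring
  have hS : ‖a‖ ^ 2 ≤ ‖a‖ * ‖b‖ + ⟪a, b⟫ := by nlinarith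
  have hS0 : (0:ℝ) < ‖a‖ * ‖b‖ + ⟪a, b⟫ := by nlinarith
  have hP0 : (0:ℝ) ≤ ‖(b - a) - (⟪a, b - a⟫ / ‖a‖ ^ 2) • a‖ ^ 2 := sq_nonneg _
  nlinarith

lemma geom_bound (u us v vs : E) (rm : ℝ) (hrm : 2 ≤ rm)
    (h1e : ‖v - u‖ ≤ 1/4) (h2e : ‖vs - us‖ ≤ 1/4)
    (h1 : v ≠ u → rm ≤ ‖u‖ ∧ ∃ t : ℝ, v - u = t • u)
    (h2 : vs ≠ us → rm ≤ ‖us‖ ∧ ∃ t : ℝ, vs - us = t • us) :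
    ‖u - us‖ * ‖v - vs‖ - ⟪u - us, v - vs⟫ ≤
      4 / rm ^ 2 * (‖v - u‖ ^ 2 * ‖us‖ ^ 2 + ‖vs - us‖ ^ 2 * ‖u‖ ^ 2)
      + 8 * (‖v - u‖ ^ 2 * (if rm - 1 ≤ ‖us‖ then (1:ℝ) else 0)
           + ‖vs - us‖ ^ 2 * (if rm - 1 ≤ ‖u‖ then (1:ℝ) else 0)) := by
  have hrm0 : (0:ℝ) < rm := by linarith
  set a := u - us with ha_def
  set b := v - vs with hb_def
  set d1 := v - u with hd1_def
  set d2 := vs - us with hd2_def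
  have hba : b - a = d1 - d2 := by rw [ha_def, hb_def, hd1_def, hd2_def]; abel
  have hind1 : (0:ℝ) ≤ (if rm - 1 ≤ ‖us‖ then (1:ℝ) else 0) := by positivity
  have hind2 : (0:ℝ) ≤ (if rm - 1 ≤ ‖u‖ then (1:ℝ) else 0) := by positivity
  rcases le_or_gt ‖a‖ (2 * ‖b - a‖) with hcase | hcase
  · -- near case
    have hL : ‖a‖ * ‖b‖ - ⟪a, b⟫ ≤ 2 * ‖a‖ * ‖b - a‖ := near_bound a b
    have hd : ‖b - a‖ ≤ ‖d1‖ + ‖d2‖ := by rw [hba]; exact norm_sub_le _ _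
    have hmain : 2 * ‖a‖ * ‖b - a‖ ≤ 4 * (‖d1‖ + ‖d2‖) ^ 2 := by
      nlinarith [norm_nonneg a, norm_nonneg (b - a), norm_nonneg d1, norm_nonneg d2]
    have hsplit : 4 * (‖d1‖ + ‖d2‖) ^ 2 ≤ 8 * ‖d1‖ ^ 2 + 8 * ‖d2‖ ^ 2 := by
      nlinarith [sq_nonneg (‖d1‖ - ‖d2‖)]
    have ht1 : 8 * ‖d1‖ ^ 2 ≤ 8 * (‖d1‖ ^ 2 * (if rm - 1 ≤ ‖us‖ then (1:ℝ) else 0)) := by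
      rcases eq_or_ne v u with hvu | hvu
      · simp [hd1_def, hvu]
      · have h1' := h1 (by simpa [hd1_def, sub_eq_zero] using hvu)
        have husn : rm - 1 ≤ ‖us‖ := by
          have : ‖u‖ ≤ ‖us‖ + ‖a‖ := by
            have e : u = us + a := by rw [ha_def]; abel
            calc ‖u‖ = ‖us + a‖ := by rw [← e]
            _ ≤ ‖us‖ + ‖a‖ := norm_add_le _ _
          have : ‖a‖ ≤ 2 * (‖d1‖ + ‖d2‖) := by linarith [hcase, hd]
          linarith [h1'.1, hcase, hd, h1e, h2e,
            (by linarith : ‖u‖ ≤ ‖us‖ + ‖a‖)]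
        rw [if_pos husn]; ring_nf; rfl
    have ht2 : 8 * ‖d2‖ ^ 2 ≤ 8 * (‖d2‖ ^ 2 * (if rm - 1 ≤ ‖u‖ then (1:ℝ) else 0)) := by
      rcases eq_or_ne vs us with hvu | hvu
      · simp [hd2_def, hvu]
      · have h2' := h2 (by simpa [hd2_def, sub_eq_zero] using hvu)
        have hun : rm - 1 ≤ ‖u‖ := by
          have : ‖us‖ ≤ ‖u‖ + ‖a‖ := by
            have e : us = u - a := by rw [ha_def]; abel
            calc ‖us‖ = ‖u - a‖ := by rw [← e]
            _ ≤ ‖u‖ + ‖a‖ := norm_sub_le _ _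
          linarith [h2'.1, hcase, hd, h1e, h2e]
        rw [if_pos hun]; ring_nf; rfl
    have hpos : (0:ℝ) ≤ 4 / rm ^ 2 * (‖d1‖ ^ 2 * ‖us‖ ^ 2 + ‖d2‖ ^ 2 * ‖u‖ ^ 2) := by positivity
    calc ‖a‖ * ‖b‖ - ⟪a, b⟫ ≤ 2 * ‖a‖ * ‖b - a‖ := hL
    _ ≤ 4 * (‖d1‖ + ‖d2‖) ^ 2 := hmain
    _ ≤ 8 * ‖d1‖ ^ 2 + 8 * ‖d2‖ ^ 2 := hsplit
    _ ≤ 8 * (‖d1‖ ^ 2 * (if rm - 1 ≤ ‖us‖ then (1:ℝ) else 0))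
        + 8 * (‖d2‖ ^ 2 * (if rm - 1 ≤ ‖u‖ then (1:ℝ) else 0)) := by linarith
    _ ≤ 4 / rm ^ 2 * (‖d1‖ ^ 2 * ‖us‖ ^ 2 + ‖d2‖ ^ 2 * ‖u‖ ^ 2)
        + 8 * (‖d1‖ ^ 2 * (if rm - 1 ≤ ‖us‖ then (1:ℝ) else 0)
             + ‖d2‖ ^ 2 * (if rm - 1 ≤ ‖u‖ then (1:ℝ) else 0)) := by linarith
  · -- far case
    rcases eq_or_ne (b - a) 0 with hba0 | hba0
    · have hb_eq : b = a := by rwa [sub_eq_zero] at hba0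
      have : ‖a‖ * ‖b‖ - ⟪a, b⟫ = 0 := by
        rw [hb_eq, real_inner_self_eq_norm_mul_norm]; ring
      rw [this]
      positivity
    · have ha0 : a ≠ 0 := by
        intro h
        rw [h, norm_zero] at hcase
        linarith [norm_nonneg (b - 0)]
      have hdle : ‖b - a‖ ≤ ‖a‖ / 2 := by linarith
      have hfar := far_bound a b ha0 hdle
      set P : E → E := fun w => w - (⟪a, w⟫ / ‖a‖ ^ 2) • a with hP_def
      have hPsub : P (b - a) = P d1 - P d2 := by
        rw [hP_def, hba]; exact proj_sub a d1 d2
      have hP1 : ‖P d1‖ ≤ ‖d1‖ * ‖us‖ / rm := by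
        rcases eq_or_ne v u with hvu | hvu
        · have : d1 = 0 := by rw [hd1_def, hvu, sub_self]
          rw [this]
          simp only [hP_def, inner_zero_right, zero_div, zero_smul, sub_zero, norm_zero]
          positivity
        · obtain ⟨hru, t, ht⟩ := h1 (by simpa [hd1_def, sub_eq_zero] using hvu)
          have hu0 : (0:ℝ) < ‖u‖ := by linarith
          have hPd1 : P d1 = t • P u := by rw [hP_def, ht]; exact proj_smul a u t
          have hPu : ‖P u‖ ≤ ‖us‖ := by
            have := proj_le a u ha0 1
            rw [one_smul] at this
            have e : u - a = us := by rw [ha_def]; abel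
            rwa [e] at this
          have htval : |t| * ‖u‖ = ‖d1‖ := by rw [ht, norm_smul, Real.norm_eq_abs]
          have : ‖P d1‖ = |t| * ‖P u‖ := by rw [hPd1, norm_smul, Real.norm_eq_abs]
          rw [this]
          calc |t| * ‖P u‖ ≤ |t| * ‖us‖ := by
                exact mul_le_mul_of_nonneg_left hPu (abs_nonneg t)
          _ ≤ ‖d1‖ * ‖us‖ / rm := by
                rw [le_div_iff₀ hrm0]
                calc |t| * ‖us‖ * rm ≤ |t| * ‖us‖ * ‖u‖ := by
                      apply mul_le_mul_of_nonneg_left hru (by positivity)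
                _ = ‖d1‖ * ‖us‖ := by rw [← htval]; ring
      have hP2 : ‖P d2‖ ≤ ‖d2‖ * ‖u‖ / rm := by
        rcases eq_or_ne vs us with hvu | hvu
        · have : d2 = 0 := by rw [hd2_def, hvu, sub_self]
          rw [this]
          simp only [hP_def, inner_zero_right, zero_div, zero_smul, sub_zero, norm_zero]
          positivity
        · obtain ⟨hru, t, ht⟩ := h2 (by simpa [hd2_def, sub_eq_zero] using hvu)
          have hus0 : (0:ℝ) < ‖us‖ := by linarith
          have hPd2 : P d2 = t • P us := by rw [hP_def, ht]; exact proj_smul a us t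
          have hPus : ‖P us‖ ≤ ‖u‖ := by
            have := proj_le a us ha0 (-1)
            rw [neg_one_smul] at this
            have e : us - -a = u := by rw [ha_def]; abel
            rwa [e] at this
          have htval : |t| * ‖us‖ = ‖d2‖ := by rw [ht, norm_smul, Real.norm_eq_abs]
          have : ‖P d2‖ = |t| * ‖P us‖ := by rw [hPd2, norm_smul, Real.norm_eq_abs]
          rw [this]
          calc |t| * ‖P us‖ ≤ |t| * ‖u‖ := by
                exact mul_le_mul_of_nonneg_left hPus (abs_nonneg t)
          _ ≤ ‖d2‖ * ‖u‖ / rm := by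
                rw [le_div_iff₀ hrm0]
                calc |t| * ‖u‖ * rm ≤ |t| * ‖u‖ * ‖us‖ := by
                      apply mul_le_mul_of_nonneg_left hru (by positivity)
                _ = ‖d2‖ * ‖u‖ := by rw [← htval]; ring
      have hPsum : ‖P (b - a)‖ ≤ ‖d1‖ * ‖us‖ / rm + ‖d2‖ * ‖u‖ / rm := by
        rw [hPsub]
        calc ‖P d1 - P d2‖ ≤ ‖P d1‖ + ‖P d2‖ := norm_sub_le _ _
        _ ≤ _ := add_le_add hP1 hP2
      have hfinal : 2 * ‖P (b - a)‖ ^ 2 ≤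
          4 / rm ^ 2 * (‖d1‖ ^ 2 * ‖us‖ ^ 2 + ‖d2‖ ^ 2 * ‖u‖ ^ 2) := by
        have h0 : (0:ℝ) ≤ ‖P (b - a)‖ := norm_nonneg _
        have h1' : (0:ℝ) ≤ ‖d1‖ * ‖us‖ / rm := by positivity
        have h2' : (0:ℝ) ≤ ‖d2‖ * ‖u‖ / rm := by positivity
        have hsq : ‖P (b - a)‖ ^ 2 ≤ (‖d1‖ * ‖us‖ / rm + ‖d2‖ * ‖u‖ / rm) ^ 2 := by
          nlinarith
        have hexp : (‖d1‖ * ‖us‖ / rm + ‖d2‖ * ‖u‖ / rm) ^ 2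
            ≤ 2 / rm ^ 2 * (‖d1‖ ^ 2 * ‖us‖ ^ 2 + ‖d2‖ ^ 2 * ‖u‖ ^ 2) := by
          rw [← add_div, div_pow]
          rw [div_le_iff₀ (by positivity : (0:ℝ) < rm ^ 2)]
          have : 2 / rm ^ 2 * (‖d1‖ ^ 2 * ‖us‖ ^ 2 + ‖d2‖ ^ 2 * ‖u‖ ^ 2) * rm ^ 2
              = 2 * (‖d1‖ ^ 2 * ‖us‖ ^ 2 + ‖d2‖ ^ 2 * ‖u‖ ^ 2) := by
            field_simp
          rw [this]
          nlinarith [sq_nonneg (‖d1‖ * ‖us‖ - ‖d2‖ * ‖u‖)]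
        calc 2 * ‖P (b - a)‖ ^ 2 ≤ 2 * ((‖d1‖ * ‖us‖ / rm + ‖d2‖ * ‖u‖ / rm) ^ 2) := by
              linarith
        _ ≤ 2 * (2 / rm ^ 2 * (‖d1‖ ^ 2 * ‖us‖ ^ 2 + ‖d2‖ ^ 2 * ‖u‖ ^ 2)) := by linarith
        _ = 4 / rm ^ 2 * (‖d1‖ ^ 2 * ‖us‖ ^ 2 + ‖d2‖ ^ 2 * ‖u‖ ^ 2) := by ring
      have hfar' : ‖a‖ * ‖b‖ - ⟪a, b⟫ ≤ 2 * ‖P (b - a)‖ ^ 2 := hfar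
      have hrest : (0:ℝ) ≤ 8 * (‖d1‖ ^ 2 * (if rm - 1 ≤ ‖us‖ then (1:ℝ) else 0)
           + ‖d2‖ ^ 2 * (if rm - 1 ≤ ‖u‖ then (1:ℝ) else 0)) := by positivity
      linarith



lemma integrable_sq_gaussianReal {v : NNReal} (hv : v ≠ 0) :
    Integrable (fun x : ℝ => x ^ 2) (gaussianReal 0 v) := by
  rw [gaussianReal_of_var_ne_zero 0 hv, ProbabilityTheory.gaussianPDF_def]
  rw [integrable_withDensity_iff ((measurable_gaussianPDFReal 0 v).ennreal_ofReal) (by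
    filter_upwards with x using ENNReal.ofReal_lt_top)]
  have hv0 : (0:ℝ) < (v:ℝ) := by positivity
  have hb : (0:ℝ) < (2 * (v:ℝ))⁻¹ := by positivity
  have base : Integrable (fun x : ℝ => x ^ (2:ℝ) * Real.exp (-(2 * (v:ℝ))⁻¹ * x ^ 2)) :=
    integrable_rpow_mul_exp_neg_mul_sq hb (by norm_num)
  have h2 : ∀ x : ℝ, x ^ (2:ℝ) = x ^ 2 := fun x => by
    rw [show (2:ℝ) = ((2:ℕ):ℝ) by norm_num, Real.rpow_natCast]
  simp_rw [h2] at base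
  refine (base.const_mul ((Real.sqrt (2 * Real.pi * v))⁻¹)).congr ?_
  filter_upwards with a
  rw [ENNReal.toReal_ofReal (gaussianPDFReal_nonneg 0 v a)]
  simp only [gaussianPDFReal]
  have : -(a - 0) ^ 2 / (2 * (v:ℝ)) = -(2 * (v:ℝ))⁻¹ * a ^ 2 := by
    field_simp
    ring
  rw [this]
  ring

lemma map_eval_pi {ι : Type*} [Fintype ι] (ν : ι → Measure ℝ)
    [∀ i, IsProbabilityMeasure (ν i)] (i : ι) :
    Measure.map (Function.eval i) (Measure.pi ν) = ν i := by
  classical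
  ext s hs
  rw [Measure.map_apply (measurable_pi_apply i) hs, Set.eval_preimage,
    Measure.pi_pi]
  rw [Finset.prod_eq_single i]
  · simp
  · intro j _ hj
    simp [Function.update_of_ne hj]
  · simp

lemma integrable_normsq_gaussLaw {d : ℕ} (hd : 2 ≤ d) :
    Integrable (fun u : EuclideanSpace ℝ (Fin d) => ‖u‖ ^ 2) (gaussLaw d) := by
  have hv : ((d : NNReal)⁻¹) ≠ 0 := by
    simp only [ne_eq, inv_eq_zero, Nat.cast_eq_zero]
    omega
  rw [gaussLaw,
    (MeasurableEquiv.measurableEmbedding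
      (MeasurableEquiv.toLp 2 (Fin d → ℝ))).integrable_map_iff]
  have hnorm : ∀ y : Fin d → ℝ,
      ‖(MeasurableEquiv.toLp 2 (Fin d → ℝ)) y‖ ^ 2 = ∑ i, (y i) ^ 2 := by
    intro y
    rw [EuclideanSpace.norm_eq, Real.sq_sqrt (by positivity)]
    simp
  have : (fun y : Fin d → ℝ => ‖(MeasurableEquiv.toLp 2 (Fin d → ℝ)) y‖ ^ 2)
      = fun y => ∑ i, (y i) ^ 2 := funext hnorm
  rw [Function.comp_def]
  simp_rw [this]
  apply integrable_finset_sum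
  intro i _
  have mp : MeasurePreserving (Function.eval i)
      (Measure.pi fun _ : Fin d => gaussianReal 0 ((d : NNReal)⁻¹))
      (gaussianReal 0 ((d : NNReal)⁻¹)) :=
    ⟨measurable_pi_apply i, map_eval_pi _ i⟩
  have := (mp.integrable_comp (integrable_sq_gaussianReal hv).aestronglyMeasurable).2
    (integrable_sq_gaussianReal hv)
  simpa [Function.comp_def] using this

end Helpers

/-- **necessity of sub-exponential rates.** For `U` Gaussian
`N(0,(1/d)Id)` in `ℝ^d`, `d ≥ 2`, and the radially truncated co-linear coupling
`V(r₋,r₊)`, the coupling / coupling-creation ratio `R(r₋,r₊)` blows up in the iterated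
limit: for every `M > 0` there is `r₀ > 0` such that for all `r₋ ≥ r₀`,
`liminf_{r₊→r₋⁺} R(r₋,r₊) ≥ M`. -/
theorem stmt16 {d : ℕ} (hd : 2 ≤ d) {Ω : Type*} [MeasurableSpace Ω] (μ : Measure Ω)
    [IsProbabilityMeasure μ]
    (U Us : Ω → EuclideanSpace ℝ (Fin d))
    (hUm : Measurable U) (hUsm : Measurable Us)
    (hUlaw : Measure.map U μ = gaussLaw d) (hUslaw : Measure.map Us μ = gaussLaw d)
    (hindep : IndepFun U Us μ) :
    ∀ M : ℝ, 0 < M → ∃ r₀ : ℝ, 0 < r₀ ∧ ∀ rm : ℝ, r₀ ≤ rm →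
      (M : EReal) ≤ liminf (fun rp => couplRatio μ U Us rm rp)
        (nhdsWithin rm (Set.Ioi rm)) := by
  intro M hM
  classical
  have hnormsq_m : Measurable (fun u : EuclideanSpace ℝ (Fin d) => ‖u‖ ^ 2) :=
    measurable_norm.pow_const 2
  have hInt2 : Integrable (fun ω => ‖U ω‖ ^ 2) μ := by
    have h := integrable_normsq_gaussLaw hd
    rw [← hUlaw] at h
    exact (integrable_map_measure hnormsq_m.aestronglyMeasurable hUm.aemeasurable).1 h
  have hInt2s : Integrable (fun ω => ‖Us ω‖ ^ 2) μ := by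
    have h := integrable_normsq_gaussLaw hd
    rw [← hUslaw] at h
    exact (integrable_map_measure hnormsq_m.aestronglyMeasurable hUsm.aemeasurable).1 h
  have transfer : ∀ g : EuclideanSpace ℝ (Fin d) → ℝ, Measurable g →
      ∫ ω, g (Us ω) ∂μ = ∫ ω, g (U ω) ∂μ := by
    intro g hg
    rw [← integral_map hUsm.aemeasurable hg.aestronglyMeasurable, hUslaw, ← hUlaw,
      integral_map hUm.aemeasurable hg.aestronglyMeasurable]
  have transfer_meas : ∀ s : Set (EuclideanSpace ℝ (Fin d)), MeasurableSet s →
      μ (Us ⁻¹' s) = μ (U ⁻¹' s) := by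
    intro s hs
    rw [← Measure.map_apply hUsm hs, hUslaw, ← hUlaw, Measure.map_apply hUm hs]
  set m2 := ∫ ω, ‖U ω‖ ^ 2 ∂μ with hm2_def
  have hm2s : ∫ ω, ‖Us ω‖ ^ 2 ∂μ = m2 := transfer _ hnormsq_m
  have hm2_nonneg : 0 ≤ m2 := by
    rw [hm2_def]
    exact integral_nonneg fun ω => by positivity
  refine ⟨2 + Real.sqrt (32 * (m2 + 1) * M), by positivity, ?_⟩
  intro rm hrm
  have hsqrt_nonneg : 0 ≤ Real.sqrt (32 * (m2 + 1) * M) := Real.sqrt_nonneg _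
  have hrm2 : 2 ≤ rm := by linarith
  have hrm1 : 1 ≤ rm - 1 := by linarith
  have hrm1sq : (0:ℝ) < (rm - 1) ^ 2 := by nlinarith only [hrm1]
  have hrmM : 32 * (m2 + 1) * M ≤ (rm - 1) ^ 2 := by
    have h1 : Real.sqrt (32 * (m2 + 1) * M) ≤ rm - 1 := by linarith
    calc 32 * (m2 + 1) * M = Real.sqrt (32 * (m2 + 1) * M) ^ 2 :=
          (Real.sq_sqrt (by positivity)).symm
    _ ≤ (rm - 1) ^ 2 := by nlinarith only [h1, hsqrt_nonneg]
  refine Filter.le_liminf_of_le (by isBoundedDefault) ?_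
  have hmem : Set.Ioo rm (rm + 1/4) ∈ nhdsWithin rm (Set.Ioi rm) :=
    Ioo_mem_nhdsGT_of_mem ⟨le_refl rm, by linarith⟩
  filter_upwards [hmem] with rp hrp
  obtain ⟨hrp1, hrp2⟩ := hrp
  have hrp0 : (0:ℝ) < rp := by linarith
  set S : Set (EuclideanSpace ℝ (Fin d)) := {u | ‖u‖ ∈ Set.Icc rm rp} with hS_def
  have hS : MeasurableSet S := measurable_norm measurableSet_Icc
  by_cases hp0 : μ {ω | ‖U ω‖ ∈ Set.Icc rm rp} = 0
  · -- degenerate case : the coupling creation vanishes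
    have hps0 : μ {ω | ‖Us ω‖ ∈ Set.Icc rm rp} = 0 := by
      have := transfer_meas S hS
      exact this.trans hp0
    have hD : couplCreation μ U Us rm rp = 0 := by
      have hcongr : (fun ω => ‖U ω - Us ω‖
            * ‖truncCoupl μ U rm rp ω - truncCoupl μ Us rm rp ω‖
          - ⟪U ω - Us ω, truncCoupl μ U rm rp ω - truncCoupl μ Us rm rp ω⟫)
          =ᵐ[μ] fun _ => (0:ℝ) := by
        have h1 : ∀ᵐ ω ∂μ, ω ∉ {ω | ‖U ω‖ ∈ Set.Icc rm rp} :=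
          measure_eq_zero_iff_ae_notMem.1 hp0
        have h2 : ∀ᵐ ω ∂μ, ω ∉ {ω | ‖Us ω‖ ∈ Set.Icc rm rp} :=
          measure_eq_zero_iff_ae_notMem.1 hps0
        filter_upwards [h1, h2] with ω hω1 hω2
        have e1 : truncCoupl μ U rm rp ω = U ω := if_neg hω1
        have e2 : truncCoupl μ Us rm rp ω = Us ω := if_neg hω2
        rw [e1, e2, real_inner_self_eq_norm_mul_norm]
        ring
      rw [couplCreation, integral_congr_ae hcongr, integral_zero]
    rw [couplRatio, if_pos hD]
    exact le_top
  · -- main case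
    have hp_pos : 0 < (μ {ω | ‖U ω‖ ∈ Set.Icc rm rp}).toReal :=
      ENNReal.toReal_pos hp0 (measure_ne_top μ _)
    set p := (μ {ω | ‖U ω‖ ∈ Set.Icc rm rp}).toReal with hp_def
    set ε := rp - rm with hε_def
    have hε : 0 < ε := by rw [hε_def]; linarith
    have hε4 : ε ≤ 1/4 := by rw [hε_def]; linarith
    -- integrability of truncated square & indicator integrals
    have hUSm : MeasurableSet {ω | ‖U ω‖ ∈ Set.Icc rm rp} := hUm hS
    have hg2U_int : Integrable (fun ω => if ‖U ω‖ ∈ Set.Icc rm rp then ‖U ω‖ ^ 2 else 0) μ := by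
      refine (integrable_const (rp ^ 2)).mono'
        ((Measurable.ite hUSm (hUm.norm.pow_const 2) measurable_const).aestronglyMeasurable) ?_
      filter_upwards with ω
      split
      · rename_i h
        rw [Real.norm_eq_abs, abs_of_nonneg (by positivity)]
        nlinarith only [h.2, norm_nonneg (U ω)]
      · simp only [norm_zero]
        positivity
    have hind_intg : ∀ k : ℝ, Integrable (fun ω => if ‖U ω‖ ∈ Set.Icc rm rp then k else 0) μ := by
      intro k
      refine (integrable_const |k|).mono'
        ((Measurable.ite hUSm measurable_const measurable_const).aestronglyMeasurable) ?_
      filter_upwards with ω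
      split
      · rw [Real.norm_eq_abs]
      · simp [abs_nonneg]
    have hind_int : ∀ k : ℝ, ∫ ω, (if ‖U ω‖ ∈ Set.Icc rm rp then k else 0) ∂μ = k * p := by
      intro k
      have e : (fun ω => if ‖U ω‖ ∈ Set.Icc rm rp then k else 0)
          = ({ω | ‖U ω‖ ∈ Set.Icc rm rp}).indicator (fun _ => k) := by
        funext ω
        by_cases h : ‖U ω‖ ∈ Set.Icc rm rp
        · rw [if_pos h,
            Set.indicator_of_mem (show ω ∈ {ω | ‖U ω‖ ∈ Set.Icc rm rp} from h) (fun _ => k)]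
        · rw [if_neg h,
            Set.indicator_of_notMem (show ω ∉ {ω | ‖U ω‖ ∈ Set.Icc rm rp} from h) (fun _ => k)]
      rw [e, integral_indicator_const _ hUSm, smul_eq_mul, mul_comm, hp_def]; rfl
    set N := ∫ ω, (if ‖U ω‖ ∈ Set.Icc rm rp then ‖U ω‖ ^ 2 else 0) ∂μ with hN_def
    have hN_lb : rm ^ 2 * p ≤ N := by
      rw [hN_def, ← hind_int (rm ^ 2)]
      refine integral_mono (hind_intg _) hg2U_int ?_
      intro ω
      dsimp only
      split
      · rename_i h
        nlinarith only [h.1, hrm2]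
      · exact le_refl 0
    have hN_ub : N ≤ rp ^ 2 * p := by
      rw [hN_def, ← hind_int (rp ^ 2)]
      refine integral_mono hg2U_int (hind_intg _) ?_
      intro ω
      dsimp only
      split
      · rename_i h
        nlinarith only [h.2, norm_nonneg (U ω)]
      · exact le_refl 0
    set c := truncConst μ U rm rp with hc_def
    have hc_eq : c = Real.sqrt (N / p) := by rw [hc_def, hN_def, hp_def]; rfl
    have hc1 : rm ≤ c := by
      rw [hc_eq]
      have hdiv : rm ^ 2 ≤ N / p := (le_div_iff₀ hp_pos).2 (by linarith)
      calc rm = Real.sqrt (rm ^ 2) := (Real.sqrt_sq (by linarith)).symm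
      _ ≤ Real.sqrt (N / p) := Real.sqrt_le_sqrt hdiv
    have hc2 : c ≤ rp := by
      rw [hc_eq]
      have hdiv : N / p ≤ rp ^ 2 := (div_le_iff₀ hp_pos).2 (by linarith)
      calc Real.sqrt (N / p) ≤ Real.sqrt (rp ^ 2) := Real.sqrt_le_sqrt hdiv
      _ = rp := Real.sqrt_sq (by linarith)
    -- the common truncation map
    have hcs : truncConst μ Us rm rp = truncConst μ U rm rp := by
      rw [truncConst, truncConst]
      have e1 : (∫ ω, (if ‖Us ω‖ ∈ Set.Icc rm rp then ‖Us ω‖ ^ 2 else 0) ∂μ)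
          = ∫ ω, (if ‖U ω‖ ∈ Set.Icc rm rp then ‖U ω‖ ^ 2 else 0) ∂μ := by
        exact transfer (fun u => if ‖u‖ ∈ Set.Icc rm rp then ‖u‖ ^ 2 else 0)
          (Measurable.ite hS hnormsq_m measurable_const)
      have e2 : μ {ω | ‖Us ω‖ ∈ Set.Icc rm rp} = μ {ω | ‖U ω‖ ∈ Set.Icc rm rp} :=
        transfer_meas S hS
      rw [e1, e2]
    set W : EuclideanSpace ℝ (Fin d) → EuclideanSpace ℝ (Fin d) :=
      fun u => if ‖u‖ ∈ Set.Icc rm rp then c • (‖u‖⁻¹ • u) else u with hW_def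
    have hWU : ∀ ω, truncCoupl μ U rm rp ω = W (U ω) := by
      intro ω
      simp only [truncCoupl, hW_def, hc_def]
    have hWUs : ∀ ω, truncCoupl μ Us rm rp ω = W (Us ω) := by
      intro ω
      simp only [truncCoupl, hW_def, hc_def, hcs]
    set ψ : EuclideanSpace ℝ (Fin d) → ℝ :=
      fun u => if ‖u‖ ∈ Set.Icc rm rp then (‖u‖ - c) ^ 2 else 0 with hψ_def
    have hψm : Measurable ψ :=
      Measurable.ite hS ((measurable_norm.sub measurable_const).pow_const 2) measurable_const
    have hψ_nonneg : ∀ u, 0 ≤ ψ u := by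
      intro u
      rw [hψ_def]
      dsimp only
      split <;> positivity
    have hψ_bdd : ∀ u, ψ u ≤ ε ^ 2 := by
      intro u
      rw [hψ_def]
      dsimp only
      split
      · rename_i h
        have h1 : |‖u‖ - c| ≤ ε := by
          rw [abs_le, hε_def]
          constructor <;> linarith [h.1, h.2]
        calc (‖u‖ - c) ^ 2 = |‖u‖ - c| ^ 2 := (sq_abs _).symm
        _ ≤ ε ^ 2 := by nlinarith only [h1, abs_nonneg (‖u‖ - c)]
      · positivity
    -- basic properties of W
    have hW_norm : ∀ u : EuclideanSpace ℝ (Fin d),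
        ‖W u - u‖ = if ‖u‖ ∈ Set.Icc rm rp then |‖u‖ - c| else 0 := by
      intro u
      rw [hW_def]
      dsimp only
      by_cases h : ‖u‖ ∈ Set.Icc rm rp
      · rw [if_pos h, if_pos h]
        have hr : (0:ℝ) < ‖u‖ := lt_of_lt_of_le (by linarith) h.1
        have e : c • (‖u‖⁻¹ • u) - u = (c * ‖u‖⁻¹ - 1) • u := by
          rw [smul_smul, sub_smul, one_smul]
        rw [e, norm_smul, Real.norm_eq_abs]
        have e2 : |c * ‖u‖⁻¹ - 1| * ‖u‖ = |(c * ‖u‖⁻¹ - 1) * ‖u‖| := by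
          rw [abs_mul, abs_of_nonneg (norm_nonneg u)]
        rw [e2]
        have e3 : (c * ‖u‖⁻¹ - 1) * ‖u‖ = c - ‖u‖ := by
          field_simp
        rw [e3, abs_sub_comm]
      · rw [if_neg h, if_neg h, sub_self, norm_zero]
    have hW_sq : ∀ u : EuclideanSpace ℝ (Fin d), ‖W u - u‖ ^ 2 = ψ u := by
      intro u
      rw [hW_norm u, hψ_def]
      dsimp only
      by_cases h : ‖u‖ ∈ Set.Icc rm rp
      · rw [if_pos h, if_pos h, sq_abs]
      · rw [if_neg h, if_neg h]
        norm_num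
    have hW_eps : ∀ u : EuclideanSpace ℝ (Fin d), ‖W u - u‖ ≤ ε := by
      intro u
      rw [hW_norm u]
      split
      · rename_i h
        rw [abs_le, hε_def]
        constructor <;> linarith [h.1, h.2]
      · linarith
    have hW_ne : ∀ u : EuclideanSpace ℝ (Fin d), W u ≠ u →
        rm ≤ ‖u‖ ∧ ∃ t : ℝ, W u - u = t • u := by
      intro u hne
      by_cases h : ‖u‖ ∈ Set.Icc rm rp
      · refine ⟨h.1, c * ‖u‖⁻¹ - 1, ?_⟩
        rw [hW_def]
        dsimp only
        rw [if_pos h, smul_smul, sub_smul, one_smul]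
      · exact absurd (by rw [hW_def]; dsimp only; rw [if_neg h]) hne
    -- the numerator integral
    set x := ∫ ω, ‖U ω - truncCoupl μ U rm rp ω‖ ^ 2 ∂μ with hx_def
    have hx_psi : x = ∫ ω, ψ (U ω) ∂μ := by
      rw [hx_def]
      congr 1
      funext ω
      rw [hWU ω, norm_sub_rev, hW_sq]
    have hψU_int : Integrable (fun ω => ψ (U ω)) μ := by
      refine (integrable_const (ε ^ 2)).mono' ((hψm.comp hUm).aestronglyMeasurable) ?_
      filter_upwards with ω
      rw [Real.norm_eq_abs, abs_of_nonneg (hψ_nonneg _)]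
      exact hψ_bdd _
    have hψUs_int : Integrable (fun ω => ψ (Us ω)) μ := by
      refine (integrable_const (ε ^ 2)).mono' ((hψm.comp hUsm).aestronglyMeasurable) ?_
      filter_upwards with ω
      rw [Real.norm_eq_abs, abs_of_nonneg (hψ_nonneg _)]
      exact hψ_bdd _
    have hx_nonneg : 0 ≤ x := by
      rw [hx_psi]
      exact integral_nonneg fun ω => hψ_nonneg _
    have hx_ub : x ≤ ε ^ 2 := by
      rw [hx_psi]
      calc ∫ ω, ψ (U ω) ∂μ ≤ ∫ _, ε ^ 2 ∂μ :=
            integral_mono hψU_int (integrable_const _) fun ω => hψ_bdd _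
      _ = ε ^ 2 := by simp [measure_univ]
    have hψs_int_eq : ∫ ω, ψ (Us ω) ∂μ = x := by
      rw [hx_psi]
      exact transfer ψ hψm
    -- the tail indicator
    set χ : EuclideanSpace ℝ (Fin d) → ℝ :=
      fun u => if rm - 1 ≤ ‖u‖ then (1:ℝ) else 0 with hχ_def
    have hχm : Measurable χ :=
      Measurable.ite (measurableSet_le measurable_const measurable_norm)
        measurable_const measurable_const
    have hχ_nonneg : ∀ u, 0 ≤ χ u := by
      intro u
      rw [hχ_def]
      dsimp only
      split <;> norm_num
    have hχ_bdd : ∀ u, χ u ≤ 1 := by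
      intro u
      rw [hχ_def]
      dsimp only
      split <;> norm_num
    have hχU_int : Integrable (fun ω => χ (U ω)) μ := by
      refine (integrable_const (1:ℝ)).mono' ((hχm.comp hUm).aestronglyMeasurable) ?_
      filter_upwards with ω
      rw [Real.norm_eq_abs, abs_of_nonneg (hχ_nonneg _)]
      exact hχ_bdd _
    have hχUs_int : Integrable (fun ω => χ (Us ω)) μ := by
      refine (integrable_const (1:ℝ)).mono' ((hχm.comp hUsm).aestronglyMeasurable) ?_
      filter_upwards with ω
      rw [Real.norm_eq_abs, abs_of_nonneg (hχ_nonneg _)]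
      exact hχ_bdd _
    set q := ∫ ω, χ (U ω) ∂μ with hq_def
    have hq_nonneg : 0 ≤ q := by
      rw [hq_def]
      exact integral_nonneg fun ω => hχ_nonneg _
    have hqs : ∫ ω, χ (Us ω) ∂μ = q := by
      rw [hq_def]
      exact transfer χ hχm
    have hcheb : q * (rm - 1) ^ 2 ≤ m2 := by
      have hmono : ∀ ω, χ (U ω) * (rm - 1) ^ 2 ≤ ‖U ω‖ ^ 2 := by
        intro ω
        rw [hχ_def]
        dsimp only
        split
        · rename_i h
          rename_i h
          rw [one_mul]
          nlinarith only [h, hrm1]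
        · rw [zero_mul]
          positivity
      calc q * (rm - 1) ^ 2 = ∫ ω, χ (U ω) * (rm - 1) ^ 2 ∂μ := by
            rw [hq_def, ← integral_mul_const]
      _ ≤ ∫ ω, ‖U ω‖ ^ 2 ∂μ := integral_mono (hχU_int.mul_const _) hInt2 hmono
      _ = m2 := by rw [hm2_def]
    have hq_ub : q ≤ m2 / (rm - 1) ^ 2 := by
      rw [le_div_iff₀ hrm1sq]
      linarith
    -- independence products
    have hprod1 : ∫ ω, ψ (U ω) * ‖Us ω‖ ^ 2 ∂μ = x * m2 := by
      have h := (hindep.comp hψm hnormsq_m).integral_mul_eq_mul_integral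
        (by simpa [Function.comp_def] using hψU_int.aestronglyMeasurable)
        (by simpa [Function.comp_def] using hInt2s.aestronglyMeasurable)
      rw [hx_psi, ← hm2s]
      exact h
    have hprod2 : ∫ ω, ψ (Us ω) * ‖U ω‖ ^ 2 ∂μ = x * m2 := by
      have h := (hindep.symm.comp hψm hnormsq_m).integral_mul_eq_mul_integral
        (by simpa [Function.comp_def] using hψUs_int.aestronglyMeasurable)
        (by simpa [Function.comp_def] using hInt2.aestronglyMeasurable)
      rw [← hψs_int_eq, hm2_def]
      exact h
    have hprod3 : ∫ ω, ψ (U ω) * χ (Us ω) ∂μ = x * q := by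
      have h := (hindep.comp hψm hχm).integral_mul_eq_mul_integral
        (by simpa [Function.comp_def] using hψU_int.aestronglyMeasurable)
        (by simpa [Function.comp_def] using hχUs_int.aestronglyMeasurable)
      rw [hx_psi, ← hqs]
      exact h
    have hprod4 : ∫ ω, ψ (Us ω) * χ (U ω) ∂μ = x * q := by
      have h := (hindep.symm.comp hψm hχm).integral_mul_eq_mul_integral
        (by simpa [Function.comp_def] using hψUs_int.aestronglyMeasurable)
        (by simpa [Function.comp_def] using hχU_int.aestronglyMeasurable)
      rw [← hψs_int_eq, hq_def]
      exact h
    -- pointwise bound for the coupling-creation integrand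
    have hFG : ∀ ω, ‖U ω - Us ω‖ * ‖truncCoupl μ U rm rp ω - truncCoupl μ Us rm rp ω‖
        - ⟪U ω - Us ω, truncCoupl μ U rm rp ω - truncCoupl μ Us rm rp ω⟫
        ≤ 4 / rm ^ 2 * (ψ (U ω) * ‖Us ω‖ ^ 2 + ψ (Us ω) * ‖U ω‖ ^ 2)
          + 8 * (ψ (U ω) * χ (Us ω) + ψ (Us ω) * χ (U ω)) := by
      intro ω
      rw [hWU ω, hWUs ω]
      have hg := geom_bound (U ω) (Us ω) (W (U ω)) (W (Us ω)) rm hrm2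
        ((hW_eps _).trans hε4) ((hW_eps _).trans hε4)
        (fun hne => hW_ne (U ω) hne) (fun hne => hW_ne (Us ω) hne)
      rw [hW_sq (U ω), hW_sq (Us ω)] at hg
      simp only [hχ_def]
      exact hg
    have hF_nonneg : ∀ ω, (0:ℝ) ≤ ‖U ω - Us ω‖
        * ‖truncCoupl μ U rm rp ω - truncCoupl μ Us rm rp ω‖
        - ⟪U ω - Us ω, truncCoupl μ U rm rp ω - truncCoupl μ Us rm rp ω⟫ := by
      intro ω
      have := real_inner_le_norm (U ω - Us ω)
        (truncCoupl μ U rm rp ω - truncCoupl μ Us rm rp ω)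
      linarith
    have hVm : Measurable (truncCoupl μ U rm rp) := by
      unfold truncCoupl
      exact Measurable.ite hUSm (by fun_prop) hUm
    have hVsm : Measurable (truncCoupl μ Us rm rp) := by
      unfold truncCoupl
      exact Measurable.ite (hUsm hS) (by fun_prop) hUsm
    have hF_meas : Measurable (fun ω => ‖U ω - Us ω‖
        * ‖truncCoupl μ U rm rp ω - truncCoupl μ Us rm rp ω‖
        - ⟪U ω - Us ω, truncCoupl μ U rm rp ω - truncCoupl μ Us rm rp ω⟫) :=
      ((hUm.sub hUsm).norm.mul (hVm.sub hVsm).norm).sub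
        ((hUm.sub hUsm).inner (hVm.sub hVsm))
    -- integrability of the dominating function
    have hpsiU_bdd : ∃ C, ∀ ω, ‖ψ (U ω)‖ ≤ C := by
      refine ⟨ε ^ 2, fun ω => ?_⟩
      rw [Real.norm_eq_abs, abs_of_nonneg (hψ_nonneg _)]
      exact hψ_bdd _
    have hpsiUs_bdd : ∃ C, ∀ ω, ‖ψ (Us ω)‖ ≤ C := by
      refine ⟨ε ^ 2, fun ω => ?_⟩
      rw [Real.norm_eq_abs, abs_of_nonneg (hψ_nonneg _)]
      exact hψ_bdd _
    have piece1 : Integrable (fun ω => ψ (U ω) * ‖Us ω‖ ^ 2) μ :=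
      hInt2s.bdd_mul ((hψm.comp hUm).aestronglyMeasurable) (ae_of_all _ hpsiU_bdd.choose_spec)
    have piece2 : Integrable (fun ω => ψ (Us ω) * ‖U ω‖ ^ 2) μ :=
      hInt2.bdd_mul ((hψm.comp hUsm).aestronglyMeasurable) (ae_of_all _ hpsiUs_bdd.choose_spec)
    have piece3 : Integrable (fun ω => ψ (U ω) * χ (Us ω)) μ :=
      hχUs_int.bdd_mul ((hψm.comp hUm).aestronglyMeasurable) (ae_of_all _ hpsiU_bdd.choose_spec)
    have piece4 : Integrable (fun ω => ψ (Us ω) * χ (U ω)) μ :=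
      hχU_int.bdd_mul ((hψm.comp hUsm).aestronglyMeasurable) (ae_of_all _ hpsiUs_bdd.choose_spec)
    have pieceA : Integrable
        (fun ω => 4 / rm ^ 2 * (ψ (U ω) * ‖Us ω‖ ^ 2 + ψ (Us ω) * ‖U ω‖ ^ 2)) μ :=
      (piece1.add piece2).const_mul _
    have pieceB : Integrable
        (fun ω => 8 * (ψ (U ω) * χ (Us ω) + ψ (Us ω) * χ (U ω))) μ :=
      (piece3.add piece4).const_mul _
    have hG_int : Integrable (fun ω =>
        4 / rm ^ 2 * (ψ (U ω) * ‖Us ω‖ ^ 2 + ψ (Us ω) * ‖U ω‖ ^ 2)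
          + 8 * (ψ (U ω) * χ (Us ω) + ψ (Us ω) * χ (U ω))) μ :=
      pieceA.add pieceB
    have hF_int : Integrable (fun ω => ‖U ω - Us ω‖
        * ‖truncCoupl μ U rm rp ω - truncCoupl μ Us rm rp ω‖
        - ⟪U ω - Us ω, truncCoupl μ U rm rp ω - truncCoupl μ Us rm rp ω⟫) μ := by
      refine hG_int.mono' hF_meas.aestronglyMeasurable ?_
      filter_upwards with ω
      rw [Real.norm_eq_abs, abs_of_nonneg (hF_nonneg ω)]
      exact hFG ω
    have hD_nonneg : 0 ≤ couplCreation μ U Us rm rp := by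
      rw [couplCreation]
      exact integral_nonneg hF_nonneg
    have hG_val : ∫ ω, (4 / rm ^ 2 * (ψ (U ω) * ‖Us ω‖ ^ 2 + ψ (Us ω) * ‖U ω‖ ^ 2)
          + 8 * (ψ (U ω) * χ (Us ω) + ψ (Us ω) * χ (U ω))) ∂μ
        = 4 / rm ^ 2 * (x * m2 + x * m2) + 8 * (x * q + x * q) := by
      have h1 : ∫ ω, (4 / rm ^ 2 * (ψ (U ω) * ‖Us ω‖ ^ 2 + ψ (Us ω) * ‖U ω‖ ^ 2)
            + 8 * (ψ (U ω) * χ (Us ω) + ψ (Us ω) * χ (U ω))) ∂μ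
          = (∫ ω, 4 / rm ^ 2 * (ψ (U ω) * ‖Us ω‖ ^ 2 + ψ (Us ω) * ‖U ω‖ ^ 2) ∂μ)
            + ∫ ω, 8 * (ψ (U ω) * χ (Us ω) + ψ (Us ω) * χ (U ω)) ∂μ :=
        integral_add pieceA pieceB
      have h2 : ∫ ω, 4 / rm ^ 2 * (ψ (U ω) * ‖Us ω‖ ^ 2 + ψ (Us ω) * ‖U ω‖ ^ 2) ∂μ
          = 4 / rm ^ 2 * ∫ ω, (ψ (U ω) * ‖Us ω‖ ^ 2 + ψ (Us ω) * ‖U ω‖ ^ 2) ∂μ :=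
        integral_const_mul _ _
      have h3 : ∫ ω, (ψ (U ω) * ‖Us ω‖ ^ 2 + ψ (Us ω) * ‖U ω‖ ^ 2) ∂μ
          = (∫ ω, ψ (U ω) * ‖Us ω‖ ^ 2 ∂μ) + ∫ ω, ψ (Us ω) * ‖U ω‖ ^ 2 ∂μ :=
        integral_add piece1 piece2
      have h4 : ∫ ω, 8 * (ψ (U ω) * χ (Us ω) + ψ (Us ω) * χ (U ω)) ∂μ
          = 8 * ∫ ω, (ψ (U ω) * χ (Us ω) + ψ (Us ω) * χ (U ω)) ∂μ :=
        integral_const_mul _ _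
      have h5 : ∫ ω, (ψ (U ω) * χ (Us ω) + ψ (Us ω) * χ (U ω)) ∂μ
          = (∫ ω, ψ (U ω) * χ (Us ω) ∂μ) + ∫ ω, ψ (Us ω) * χ (U ω) ∂μ :=
        integral_add piece3 piece4
      rw [h1, h2, h3, h4, h5, hprod1, hprod2, hprod3, hprod4]
    have hD_le : couplCreation μ U Us rm rp
        ≤ 4 / rm ^ 2 * (x * m2 + x * m2) + 8 * (x * q + x * q) := by
      rw [couplCreation, ← hG_val]
      exact integral_mono hF_int hG_int hFG
    have hD_le2 : couplCreation μ U Us rm rp ≤ 24 * (m2 + 1) * x / (rm - 1) ^ 2 := by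
      have hsq_le : (rm - 1) ^ 2 ≤ rm ^ 2 := by nlinarith
      have e1 : 4 / rm ^ 2 * (x * m2 + x * m2) ≤ 8 * x * m2 / (rm - 1) ^ 2 := by
        rw [div_mul_eq_mul_div, div_le_div_iff₀ (by positivity) hrm1sq]
        have hmm := mul_le_mul_of_nonneg_left hsq_le (mul_nonneg hx_nonneg hm2_nonneg)
        nlinarith only [hmm]
      have e2 : 8 * (x * q + x * q) ≤ 16 * x * m2 / (rm - 1) ^ 2 := by
        have h1 : 16 * x * q ≤ 16 * x * (m2 / (rm - 1) ^ 2) :=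
          mul_le_mul_of_nonneg_left hq_ub (by positivity)
        calc 8 * (x * q + x * q) = 16 * x * q := by ring
        _ ≤ 16 * x * (m2 / (rm - 1) ^ 2) := h1
        _ = 16 * x * m2 / (rm - 1) ^ 2 := by ring
      calc couplCreation μ U Us rm rp
          ≤ 4 / rm ^ 2 * (x * m2 + x * m2) + 8 * (x * q + x * q) := hD_le
      _ ≤ 8 * x * m2 / (rm - 1) ^ 2 + 16 * x * m2 / (rm - 1) ^ 2 := by linarith
      _ = 24 * m2 * x / (rm - 1) ^ 2 := by ring
      _ ≤ 24 * (m2 + 1) * x / (rm - 1) ^ 2 := by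
          rw [div_le_div_iff₀ hrm1sq hrm1sq]
          nlinarith only [mul_nonneg hx_nonneg (sq_nonneg (rm - 1))]
    -- conclusion
    by_cases hD0 : couplCreation μ U Us rm rp = 0
    · simp only [couplRatio, if_pos hD0]
      exact le_top
    · simp only [couplRatio, if_neg hD0]
      have hD_pos : 0 < couplCreation μ U Us rm rp := lt_of_le_of_ne hD_nonneg (Ne.symm hD0)
      have hx_pos : 0 < x := by
        by_contra hxc
        push_neg at hxc
        have hnum : 24 * (m2 + 1) * x ≤ 0 := by nlinarith only [hxc, hm2_nonneg]
        have hcontr : couplCreation μ U Us rm rp ≤ 0 :=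
          le_trans hD_le2 (div_nonpos_of_nonpos_of_nonneg hnum hrm1sq.le)
        linarith
      have hε2 : ε ^ 2 ≤ 1 := by
        have h := mul_le_mul hε4 hε4 hε.le (by norm_num : (0:ℝ) ≤ 1/4)
        calc ε ^ 2 = ε * ε := pow_two ε
        _ ≤ 1/4 * (1/4) := h
        _ ≤ 1 := by norm_num
      have hx1 : x ≤ 1 := le_trans hx_ub hε2
      have h34 : 3 / 4 * x ≤ x - x ^ 2 / 4 := by nlinarith only [hx1, hx_nonneg]
      have hcoef : M * (24 * (m2 + 1)) ≤ 3 / 4 * (rm - 1) ^ 2 := by linarith only [hrmM]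
      rw [← hx_def, EReal.coe_le_coe_iff, le_div_iff₀ hD_pos]
      calc M * couplCreation μ U Us rm rp
          ≤ M * (24 * (m2 + 1) * x / (rm - 1) ^ 2) := mul_le_mul_of_nonneg_left hD_le2 hM.le
      _ = M * (24 * (m2 + 1)) / (rm - 1) ^ 2 * x := by ring
      _ ≤ 3 / 4 * (rm - 1) ^ 2 / (rm - 1) ^ 2 * x := by
            refine mul_le_mul_of_nonneg_right ?_ hx_nonneg
            rw [div_le_div_iff₀ hrm1sq hrm1sq]
            nlinarith only [hcoef, hrm1sq, sq_nonneg (rm - 1)]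
      _ = 3 / 4 * x := by field_simp
      _ ≤ x - x ^ 2 / 4 := h34
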